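/- Let κ : ℝ → ℝ be continuous with κ(t) ≤ -k for all t ≥ 0, k > 0, and let a solve a'' + κ a = 0 with a(0)=1, a'(0)=0. Then for all t ≥ 0, a(t) ≥ cosh(√k · t). -/

import Mathlib

theorem stmt_5 (κ a a' : ℝ → ℝ) (k : ℝ)
    (hk : 0 < k)
    (hκc : Continuous κ)
    (hκ : ∀ t : ℝ, 0 ≤ t → κ t ≤ -k)
    (ha : ∀ t : ℝ, HasDerivAt a (a' t) t)
    (ha' : ∀ t : ℝ, HasDerivAt a' (-(κ t * a t)) t)
    (ha0 : a 0 = 1) (ha'0 : a' 0 = 0) :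
    ∀ t : ℝ, 0 ≤ t → Real.cosh (Real.sqrt k * t) ≤ a t := by
  set s := Real.sqrt k with hs
  have hs0 : 0 < s := Real.sqrt_pos.mpr hk
  have hs2 : s ^ 2 = k := Real.sq_sqrt hk.le
  have haC : Continuous a := by
    rw [continuous_iff_continuousAt]; exact fun x => (ha x).continuousAt
  have ha'C : Continuous a' := by
    rw [continuous_iff_continuousAt]; exact fun x => (ha' x).continuousAt
  -- Stage 1: a ≥ 0 on [0, ∞)
  have hpos : ∀ u : ℝ, 0 ≤ u → 0 ≤ a u := by
    by_contra h
    push_neg at h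
    obtain ⟨u, hu0, hua⟩ := h
    set S : Set ℝ := Set.Ici 0 ∩ a ⁻¹' Set.Iic 0 with hS
    have hSne : S.Nonempty := ⟨u, hu0, hua.le⟩
    have hSclosed : IsClosed S := isClosed_Ici.inter (isClosed_Iic.preimage haC)
    have hSbd : BddBelow S := ⟨0, fun v hv => hv.1⟩
    set T := sInf S with hT
    have hTS : T ∈ S := hSclosed.csInf_mem hSne hSbd
    have hT0 : 0 ≤ T := hTS.1
    have hTa : a T ≤ 0 := hTS.2
    -- a is nonneg on [0, T)
    have hico : ∀ v ∈ Set.Ico (0:ℝ) T, 0 ≤ a v := by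
      intro v hv
      by_contra hav
      push_neg at hav
      have : v ∈ S := ⟨hv.1, hav.le⟩
      exact absurd (csInf_le hSbd this) (not_le.mpr hv.2)
    -- a' is monotone on [0, T]
    have hmono' : MonotoneOn a' (Set.Icc 0 T) := by
      apply monotoneOn_of_deriv_nonneg (convex_Icc 0 T) ha'C.continuousOn
      · exact fun x _ => (ha' x).differentiableAt.differentiableWithinAt
      · intro x hx
        rw [interior_Icc] at hx
        rw [(ha' x).deriv]
        have h1 : κ x ≤ -k := hκ x hx.1.le
        have h2 : 0 ≤ a x := hico x ⟨hx.1.le, hx.2⟩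
        nlinarith
    have ha'nn : ∀ v ∈ Set.Icc (0:ℝ) T, 0 ≤ a' v := by
      intro v hv
      have := hmono' (Set.left_mem_Icc.mpr hT0) hv hv.1
      rwa [ha'0] at this
    have hmono : MonotoneOn a (Set.Icc 0 T) := by
      apply monotoneOn_of_deriv_nonneg (convex_Icc 0 T) haC.continuousOn
      · exact fun x _ => (ha x).differentiableAt.differentiableWithinAt
      · intro x hx
        rw [interior_Icc] at hx
        rw [(ha x).deriv]
        exact ha'nn x ⟨hx.1.le, hx.2.le⟩
    have := hmono (Set.left_mem_Icc.mpr hT0) (Set.right_mem_Icc.mpr hT0) hT0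
    rw [ha0] at this
    linarith
  -- Comparison functions
  have hcosh : ∀ u : ℝ, HasDerivAt (fun v => Real.cosh (s * v)) (s * Real.sinh (s * u)) u := by
    intro u
    simpa [mul_comm] using ((hasDerivAt_id u).const_mul s).cosh
  have hsinh : ∀ u : ℝ, HasDerivAt (fun v => Real.sinh (s * v)) (s * Real.cosh (s * u)) u := by
    intro u
    simpa [mul_comm] using ((hasDerivAt_id u).const_mul s).sinh
  have hexp : ∀ u : ℝ, HasDerivAt (fun v => Real.exp (s * v)) (s * Real.exp (s * u)) u := by
    intro u
    simpa [mul_comm] using ((hasDerivAt_id u).const_mul s).exp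
  have hnexp : ∀ u : ℝ, HasDerivAt (fun v => Real.exp (-(s * v))) (-s * Real.exp (-(s * u))) u := by
    intro u
    simpa [mul_comm] using (((hasDerivAt_id u).const_mul s).neg).exp
  -- The inner function I = a' - s sinh - s (a - cosh)
  set I : ℝ → ℝ := fun v => a' v - s * Real.sinh (s * v) - s * (a v - Real.cosh (s * v)) with hIdef
  have hI : ∀ u : ℝ, HasDerivAt I
      (-(κ u * a u) - s * (s * Real.cosh (s * u)) - s * (a' u - s * Real.sinh (s * u))) u := by
    intro u
    exact ((ha' u).sub ((hsinh u).const_mul s)).sub (((ha u).sub (hcosh u)).const_mul s)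
  set F : ℝ → ℝ := fun v => Real.exp (s * v) * I v with hFdef
  have hF : ∀ u : ℝ, HasDerivAt F (Real.exp (s * u) * ((-κ u - s ^ 2) * a u)) u := by
    intro u
    have := (hexp u).mul (hI u)
    refine HasDerivAt.congr_deriv this ?_
    simp only [hIdef]
    ring
  have hFdiff : Differentiable ℝ F := fun u => (hF u).differentiableAt
  have hF0 : F 0 = 0 := by
    simp [hFdef, hIdef, ha0, ha'0]
  have hFmono : MonotoneOn F (Set.Ici 0) := by
    apply monotoneOn_of_deriv_nonneg (convex_Ici 0) hFdiff.continuous.continuousOn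
      (fun x _ => (hFdiff x).differentiableWithinAt)
    intro x hx
    rw [interior_Ici] at hx
    rw [(hF x).deriv]
    have h1 : κ x ≤ -k := hκ x hx.le
    have h2 : 0 ≤ a x := hpos x hx.le
    have h3 : 0 < Real.exp (s * x) := Real.exp_pos _
    have h4 : 0 ≤ -κ x - s ^ 2 := by rw [hs2]; linarith
    exact mul_nonneg h3.le (mul_nonneg h4 h2)
  have hFnn : ∀ u : ℝ, 0 ≤ u → 0 ≤ F u := by
    intro u hu
    have := hFmono Set.self_mem_Ici hu hu
    rwa [hF0] at this
  have hInn : ∀ u : ℝ, 0 ≤ u → 0 ≤ I u := by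
    intro u hu
    have h1 := hFnn u hu
    have h3 : 0 < Real.exp (s * u) := Real.exp_pos _
    simp only [hFdef] at h1
    nlinarith
  set G : ℝ → ℝ := fun v => Real.exp (-(s * v)) * (a v - Real.cosh (s * v)) with hGdef
  have hG : ∀ u : ℝ, HasDerivAt G (Real.exp (-(s * u)) * I u) u := by
    intro u
    have := (hnexp u).mul ((ha u).sub (hcosh u))
    refine HasDerivAt.congr_deriv this ?_
    simp only [hIdef, Pi.sub_apply]
    ring
  have hGdiff : Differentiable ℝ G := fun u => (hG u).differentiableAt
  have hG0 : G 0 = 0 := by simp [hGdef, ha0]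
  have hGmono : MonotoneOn G (Set.Ici 0) := by
    apply monotoneOn_of_deriv_nonneg (convex_Ici 0) hGdiff.continuous.continuousOn
      (fun x _ => (hGdiff x).differentiableWithinAt)
    intro x hx
    rw [interior_Ici] at hx
    rw [(hG x).deriv]
    exact mul_nonneg (Real.exp_pos _).le (hInn x hx.le)
  intro t ht
  have h1 := hGmono Set.self_mem_Ici ht ht
  rw [hG0] at h1
  simp only [hGdef] at h1
  have h3 : 0 < Real.exp (-(s * t)) := Real.exp_pos _
  nlinarith
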